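/- Let d, d' ∈ M be such that G(d/A) = G(d'/A), d is Archimedean over A, and d' is ramified over A. Then G(d + d'/A) = G(d/A) and d + d' is Archimedean over A. -/

import Mathlib

/-- `c` and `d` realize the same cut over the subgroup `A`. -/
def SameCut {M : Type*} [AddCommGroup M] [LinearOrder M] [IsOrderedAddMonoid M] (A : AddSubgroup M) (c d : M) : Prop :=
  ∀ a ∈ A, ((a ≤ c ↔ a ≤ d) ∧ (c ≤ a ↔ d ≤ a))

/-- `Stab(d/A)`: elements `a ∈ A` such that `d + a` and `d` realize the same cut over `A`. -/
def Stab {M : Type*} [AddCommGroup M] [LinearOrder M] [IsOrderedAddMonoid M] (A : AddSubgroup M) (d : M) : Set M :=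
  {a | a ∈ A ∧ SameCut A (d + a) d}

open Classical in
/-- `G(d/A)`. -/
def Gset {M : Type*} [AddCommGroup M] [LinearOrder M] [IsOrderedAddMonoid M] (A : AddSubgroup M) (d : M) : Set M :=
  if d ∈ A then ({0} : Set M)
  else {x | ∀ a ∈ A, a ∉ Stab A d → (-|a| < x ∧ x < |a|)}

/-- `H(d/A)`. -/
def Hset {M : Type*} [AddCommGroup M] [LinearOrder M] [IsOrderedAddMonoid M] (A : AddSubgroup M) (d : M) : Set M :=
  {x | ∃ a ∈ Stab A d, |x| ≤ |a|}

/-- `Δ(x) ≤ Δ(y)`: `|x| ≤ n • |y|` for some natural number `n`. -/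
def DeltaLe {M : Type*} [AddCommGroup M] [LinearOrder M] [IsOrderedAddMonoid M] (x y : M) : Prop :=
  ∃ n : ℕ, |x| ≤ n • |y|

/-- `Δ(x) = Δ(y)`. -/
def DeltaEq {M : Type*} [AddCommGroup M] [LinearOrder M] [IsOrderedAddMonoid M] (x y : M) : Prop :=
  DeltaLe x y ∧ DeltaLe y x

/-- `Δ(x) < Δ(y)`. -/
def DeltaLt {M : Type*} [AddCommGroup M] [LinearOrder M] [IsOrderedAddMonoid M] (x y : M) : Prop :=
  DeltaLe x y ∧ ¬ DeltaLe y x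

/-- `Δ(x) ∈ Δ(A)`. -/
def DeltaMem {M : Type*} [AddCommGroup M] [LinearOrder M] [IsOrderedAddMonoid M] (x : M) (A : AddSubgroup M) : Prop :=
  ∃ a ∈ A, DeltaEq x a

/-- `a` is a ramifier of `d` over `A`: `a ∈ A` and `Δ(d − a) ∉ Δ(A)`. -/
def IsRamifier {M : Type*} [AddCommGroup M] [LinearOrder M] [IsOrderedAddMonoid M] (A : AddSubgroup M) (d a : M) : Prop :=
  a ∈ A ∧ ¬ DeltaMem (d - a) A

/-- `d` is ramified over `A` if it admits a ramifier. -/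
def Ramified {M : Type*} [AddCommGroup M] [LinearOrder M] [IsOrderedAddMonoid M] (A : AddSubgroup M) (d : M) : Prop :=
  ∃ a, IsRamifier A d a

/-- `d` is cut-independent from `B` over `A`: every closed interval with bounds in `B`
containing `d` contains a point of `A`. -/
def CutIndep {M : Type*} [AddCommGroup M] [LinearOrder M] [IsOrderedAddMonoid M] (A B : AddSubgroup M) (d : M) : Prop :=
  ∀ b₁ ∈ B, ∀ b₂ ∈ B, b₁ ≤ d → d ≤ b₂ → ∃ a ∈ A, b₁ ≤ a ∧ a ≤ b₂

section ArchAddRamifiedAux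

variable {M : Type*} [AddCommGroup M] [LinearOrder M] [IsOrderedAddMonoid M] {A : AddSubgroup M}

private lemma abs_nsmul' (n : ℕ) (a : M) : |n • a| = n • |a| := by
  rcases le_total 0 a with h | h
  · rw [abs_of_nonneg h, abs_of_nonneg (nsmul_nonneg h n)]
  · rw [abs_of_nonpos h, abs_of_nonpos (nsmul_nonpos h n), smul_neg]

private lemma le_of_nsmul_le_nsmul' {n : ℕ} (hn : n ≠ 0) {a b : M}
    (h : n • a ≤ n • b) : a ≤ b := by
  by_contra hab
  exact absurd h (not_le.2 (nsmul_lt_nsmul_right hn (not_le.1 hab)))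

private lemma deltaLe_trans' {x y z : M} : DeltaLe x y → DeltaLe y z → DeltaLe x z
  | ⟨n, hn⟩, ⟨m, hm⟩ => ⟨n * m, hn.trans (by
      calc n • |y| ≤ n • (m • |z|) := nsmul_le_nsmul_right hm n
        _ = (n * m) • |z| := smul_smul n m |z|)⟩

private lemma deltaEq_refl' (x : M) : DeltaEq x x := ⟨⟨1, by simp⟩, ⟨1, by simp⟩⟩

private lemma deltaEq_add_small {x ε : M} (h : ∀ n : ℕ, ¬ (|x| ≤ n • |ε|)) :
    DeltaEq (x + ε) x := by
  have hε1 : |ε| < |x| := by have := not_le.1 (h 1); simpa using this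
  have hε2 : |ε| + |ε| < |x| := by have := not_le.1 (h 2); rwa [two_nsmul] at this
  constructor
  · refine ⟨2, ?_⟩
    rw [two_nsmul]
    calc |x + ε| ≤ |x| + |ε| := abs_add_le _ _
      _ ≤ |x| + |x| := add_le_add_right hε1.le _
  · refine ⟨2, ?_⟩
    have ha : |x| ≤ |x + ε| + |ε| := by
      calc |x| = |x + ε + -ε| := by rw [add_neg_cancel_right]
        _ ≤ |x + ε| + |-ε| := abs_add_le _ _
        _ = |x + ε| + |ε| := by rw [abs_neg]
    have hb : |x| - |ε| ≤ |x + ε| := sub_le_iff_le_add.2 ha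
    have hc : |x| ≤ (|x| - |ε|) + (|x| - |ε|) := by
      rw [sub_add_sub_comm, le_sub_iff_add_le]
      exact add_le_add_right hε2.le _
    rw [two_nsmul]
    exact hc.trans (add_le_add hb hb)

private lemma sameCut_refl' (A : AddSubgroup M) (c : M) : SameCut A c c :=
  fun _ _ => ⟨Iff.rfl, Iff.rfl⟩

private lemma sameCut_symm' {c d : M} (h : SameCut A c d) : SameCut A d c :=
  fun a ha => ⟨(h a ha).1.symm, (h a ha).2.symm⟩

private lemma sameCut_trans' {c d e : M} (h1 : SameCut A c d) (h2 : SameCut A d e) :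
    SameCut A c e :=
  fun a ha => ⟨(h1 a ha).1.trans (h2 a ha).1, (h1 a ha).2.trans (h2 a ha).2⟩

private lemma sameCut_shift' {c e a : M} (ha : a ∈ A) (h : SameCut A c e) :
    SameCut A (c + a) (e + a) := by
  intro x hx
  obtain ⟨h1, h2⟩ := h (x - a) (A.sub_mem hx ha)
  constructor
  · rw [← sub_le_iff_le_add, ← sub_le_iff_le_add]; exact h1
  · rw [← le_sub_iff_add_le, ← le_sub_iff_add_le]; exact h2

private lemma sameCut_of_key' {x y : M} (hx : ∀ a ∈ A, x ≠ a) (hy : ∀ a ∈ A, y ≠ a)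
    (key : ∀ a ∈ A, (a ≤ x ↔ a ≤ y)) : SameCut A x y := by
  intro a haA
  refine ⟨key a haA, ?_, ?_⟩
  · intro h
    by_contra h2
    exact hx a haA (le_antisymm h ((key a haA).mpr (not_le.1 h2).le))
  · intro h
    by_contra h2
    exact hy a haA (le_antisymm h ((key a haA).mp (not_le.1 h2).le))

private lemma stab_zero' (d : M) : (0 : M) ∈ Stab A d :=
  ⟨A.zero_mem, by rw [add_zero]; exact sameCut_refl' A d⟩

private lemma stab_neg' {d b : M} (hb : b ∈ Stab A d) : -b ∈ Stab A d := by
  obtain ⟨hbA, hsc⟩ := hb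
  refine ⟨A.neg_mem hbA, ?_⟩
  have h := sameCut_shift' (A.neg_mem hbA) hsc
  rw [add_neg_cancel_right] at h
  exact sameCut_symm' h

private lemma stab_add' {d b c : M} (hb : b ∈ Stab A d) (hc : c ∈ Stab A d) :
    b + c ∈ Stab A d := by
  obtain ⟨hbA, hscb⟩ := hb
  obtain ⟨hcA, hscc⟩ := hc
  refine ⟨A.add_mem hbA hcA, ?_⟩
  have h1 := sameCut_shift' hcA hscb
  rw [show d + (b + c) = d + b + c from by abel]
  exact sameCut_trans' h1 hscc

private lemma stab_nsmul' {d b : M} (hb : b ∈ Stab A d) : ∀ n : ℕ, n • b ∈ Stab A d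
  | 0 => by rw [zero_nsmul]; exact stab_zero' d
  | n + 1 => by rw [succ_nsmul]; exact stab_add' (stab_nsmul' hb n) hb

private lemma stab_abs' {d b : M} (hb : b ∈ Stab A d) : |b| ∈ Stab A d := by
  rcases abs_choice b with h | h <;> rw [h]
  exacts [hb, stab_neg' hb]

private lemma not_deltaLe_of_stab {d b a : M} (hd : d ∉ A) (hb : b ∈ Stab A d)
    (haA : a ∈ A) : ¬ DeltaLe (d - a) b := by
  rintro ⟨n, hn⟩
  have hsS : n • |b| ∈ Stab A d := stab_nsmul' (stab_abs' hb) n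
  have hne : d ≠ a := fun h => hd (h ▸ haA)
  rcases le_total d a with hda | had
  · have h0 : a - d ≤ n • |b| := by
      calc a - d ≤ |a - d| := le_abs_self _
        _ = |d - a| := abs_sub_comm a d
        _ ≤ n • |b| := hn
    have h1 : a ≤ d + n • |b| := by
      rw [add_comm]
      exact sub_le_iff_le_add.1 h0
    have h2 := (hsS.2 a haA).1.mp h1
    exact hne (le_antisymm hda h2)
  · have hsneg : -(n • |b|) ∈ Stab A d := stab_neg' hsS
    have h0 : d - a ≤ n • |b| := (le_abs_self _).trans hn
    have h1 : d + -(n • |b|) ≤ a := by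
      rw [← sub_eq_add_neg, sub_le_iff_le_add]
      exact sub_le_iff_le_add'.1 h0
    have h2 := (hsneg.2 a haA).2.mp h1
    exact hne (le_antisymm h2 had)

private lemma stab_shift' {d a : M} (ha : a ∈ A) : Stab A (d + a) = Stab A d := by
  ext b
  simp only [Stab, Set.mem_setOf_eq]
  constructor
  · rintro ⟨hbA, hsc⟩
    refine ⟨hbA, ?_⟩
    have h := sameCut_shift' (A.neg_mem ha) hsc
    rw [show d + a + b + -a = d + b from by abel, show d + a + -a = d from by abel] at h
    exact h
  · rintro ⟨hbA, hsc⟩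
    refine ⟨hbA, ?_⟩
    have h := sameCut_shift' ha hsc
    rw [show d + b + a = d + a + b from by abel] at h
    exact h

private lemma gset_shift' {d a : M} (ha : a ∈ A) : Gset A (d + a) = Gset A d := by
  by_cases hd : d ∈ A
  · have hda : d + a ∈ A := A.add_mem hd ha
    simp only [Gset, if_pos hd, if_pos hda]
  · have hda : d + a ∉ A := fun h => hd (by simpa using A.sub_mem h ha)
    simp only [Gset, if_neg hd, if_neg hda, stab_shift' ha]

private lemma ramified_shift' {d a : M} (ha : a ∈ A) :
    Ramified A (d + a) ↔ Ramified A d := by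
  constructor
  · rintro ⟨b, hb, hnd⟩
    refine ⟨b - a, A.sub_mem hb ha, ?_⟩
    rw [show d - (b - a) = d + a - b from by abel]
    exact hnd
  · rintro ⟨b, hb, hnd⟩
    refine ⟨b + a, A.add_mem hb ha, ?_⟩
    rw [show d + a - (b + a) = d - b from by abel]
    exact hnd

private lemma key_small
    (hAdiv : ∀ a ∈ A, ∀ n : ℕ, 0 < n → ∃ b ∈ A, n • b = a)
    {d ε : M} (hd : d ∉ A)
    (hArch : ∀ a ∈ A, DeltaMem (d - a) A)
    (hεG : ∀ a ∈ A, a ∉ Stab A d → (-|a| < ε ∧ ε < |a|)) :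
    ∀ a ∈ A, ∀ n : ℕ, ¬ (|d - a| ≤ n • |ε|) := by
  intro a haA n hle
  have hne : d - a ≠ 0 := sub_ne_zero.2 fun h => hd (h ▸ haA)
  have hpos : 0 < |d - a| := abs_pos.2 hne
  obtain ⟨c, hcA, ⟨m, hm⟩, ⟨k, hk⟩⟩ := hArch a haA
  have hn0 : n ≠ 0 := by
    rintro rfl
    rw [zero_nsmul] at hle
    exact absurd hle (not_le.2 hpos)
  have hk0 : k ≠ 0 := by
    rintro rfl
    rw [zero_nsmul] at hk
    have hc0 : c = 0 := abs_eq_zero.1 (le_antisymm hk (abs_nonneg c))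
    rw [hc0, abs_zero, smul_zero] at hm
    exact absurd hm (not_le.2 hpos)
  obtain ⟨c'', hc''A, hc''⟩ := hAdiv c hcA (k * n)
    (Nat.pos_of_ne_zero (Nat.mul_ne_zero hk0 hn0))
  have habs : (k * n) • |c''| = |c| := by rw [← abs_nsmul', hc'']
  have hle2 : |c''| ≤ |ε| := by
    refine le_of_nsmul_le_nsmul' (Nat.mul_ne_zero hk0 hn0) ?_
    rw [habs]
    calc |c| ≤ k • |d - a| := hk
      _ ≤ k • (n • |ε|) := nsmul_le_nsmul_right hle k
      _ = (k * n) • |ε| := smul_smul k n |ε|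
  have hDL : DeltaLe (d - a) c'' := by
    refine ⟨m * (k * n), ?_⟩
    rw [← smul_smul, habs]
    exact hm
  have hnot : c'' ∉ Stab A d := fun hs => not_deltaLe_of_stab hd hs haA hDL
  have hlt : |ε| < |c''| := abs_lt.2 (hεG c'' hc''A hnot)
  exact absurd hle2 (not_le.2 hlt)

private lemma sameCut_add_of_small {d ε : M} (hd : d ∉ A)
    (hsmall : ∀ a ∈ A, ∀ n : ℕ, ¬ (|d - a| ≤ n • |ε|)) : SameCut A (d + ε) d := by
  refine sameCut_of_key' ?_ (fun a haA h => hd (h ▸ haA)) ?_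
  · intro a haA h
    apply hsmall a haA 1
    rw [one_nsmul, show d - a = -ε from by rw [← h]; abel, abs_neg]
  · intro a haA
    constructor
    · intro h1
      by_contra h2
      push_neg at h2
      apply hsmall a haA 1
      rw [one_nsmul, abs_sub_comm, abs_of_pos (sub_pos.2 h2)]
      have h3 : a - d ≤ ε := by rw [sub_le_iff_le_add, add_comm]; exact h1
      exact h3.trans (le_abs_self ε)
    · intro h1
      by_contra h2
      push_neg at h2
      apply hsmall a haA 1
      rw [one_nsmul, abs_of_nonneg (sub_nonneg.2 h1)]
      have h5 : d - a < -ε := by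
        have h6 : ε < a - d := lt_sub_iff_add_lt.2 (by rwa [add_comm] at h2)
        have h7 := neg_lt_neg h6
        rwa [neg_sub] at h7
      exact le_of_lt (h5.trans_le (neg_le_abs ε))

private lemma stab_add_small_eq {d ε : M} (hd : d ∉ A)
    (hsmall : ∀ a ∈ A, ∀ n : ℕ, ¬ (|d - a| ≤ n • |ε|)) :
    Stab A (d + ε) = Stab A d := by
  have h1 : SameCut A (d + ε) d := sameCut_add_of_small hd hsmall
  have h2 : ∀ b ∈ A, SameCut A (d + b + ε) (d + b) := by
    intro b hbA
    refine sameCut_add_of_small (fun h => hd (by simpa using A.sub_mem h hbA)) ?_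
    intro a haA n
    rw [show d + b - a = d - (a - b) from by abel]
    exact hsmall (a - b) (A.sub_mem haA hbA) n
  ext b
  simp only [Stab, Set.mem_setOf_eq]
  constructor
  · rintro ⟨hbA, hsc⟩
    refine ⟨hbA, ?_⟩
    rw [show d + ε + b = d + b + ε from by abel] at hsc
    exact sameCut_trans' (sameCut_trans' (sameCut_symm' (h2 b hbA)) hsc) h1
  · rintro ⟨hbA, hsc⟩
    refine ⟨hbA, ?_⟩
    rw [show d + ε + b = d + b + ε from by abel]
    exact sameCut_trans' (sameCut_trans' (h2 b hbA) hsc) (sameCut_symm' h1)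

end ArchAddRamifiedAux

/-- If `G(d/A) = G(d'/A)`, `d` is Archimedean over `A` and `d'` is ramified over `A`,
then `G(d + d'/A) = G(d/A)` and `d + d'` is Archimedean over `A`. -/
theorem arch_add_ramified (M : Type*) [AddCommGroup M] [LinearOrder M] [IsOrderedAddMonoid M]
    (hMdiv : ∀ x : M, ∀ n : ℕ, 0 < n → ∃ y : M, n • y = x)
    (A : AddSubgroup M)
    (hAdiv : ∀ a ∈ A, ∀ n : ℕ, 0 < n → ∃ b ∈ A, n • b = a)
    (d d' : M) (hG : Gset A d = Gset A d')
    (hdArch : ¬ Ramified A d) (hd'Ram : Ramified A d') :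
    Gset A (d + d') = Gset A d ∧ ¬ Ramified A (d + d') := by
  classical
  obtain ⟨a', ha'A, hram⟩ := hd'Ram
  set ε := d' - a' with hεdef
  have hArch : ∀ a ∈ A, DeltaMem (d - a) A := by
    intro a haA
    by_contra h
    exact hdArch ⟨a, haA, h⟩
  have hd'A : d' ∉ A := by
    intro h
    exact hram ⟨ε, by rw [hεdef]; exact A.sub_mem h ha'A, deltaEq_refl' ε⟩
  have hεne : ε ≠ 0 := by
    intro h
    refine hram ⟨0, A.zero_mem, ?_⟩
    rw [h]
    exact deltaEq_refl' 0
  -- Step A : ε ∈ Gset A d'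
  have hεG' : ε ∈ Gset A d' := by
    rw [Gset, if_neg hd'A]
    intro a haA hanot
    by_contra hcon
    apply hanot
    have hale : |a| ≤ |ε| := by
      rcases not_and_or.1 hcon with h | h
      · push_neg at h
        calc |a| ≤ -ε := le_neg.1 h
          _ ≤ |ε| := neg_le_abs ε
      · push_neg at h
        exact h.trans (le_abs_self ε)
    by_cases ha0 : a = 0
    · subst ha0
      exact stab_zero' d'
    have hsa : ∀ n : ℕ, ¬ (|ε| ≤ n • |a|) := by
      intro n hn
      exact hram ⟨a, haA, ⟨n, hn⟩, ⟨1, by simpa using hale⟩⟩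
    have habs : ∀ c ∈ A, |c - d'| ≤ |a| → False := by
      intro c hcA hle
      have hbA : c - a' ∈ A := A.sub_mem hcA ha'A
      have hsm : ∀ n : ℕ, ¬ (|ε| ≤ n • |c - a' - ε|) := by
        intro n hn
        apply hsa n
        refine hn.trans (nsmul_le_nsmul_right ?_ n)
        rwa [show c - a' - ε = c - d' from by rw [hεdef]; abel]
      have hde : DeltaEq (ε + (c - a' - ε)) ε := deltaEq_add_small hsm
      rw [show ε + (c - a' - ε) = c - a' from by abel] at hde
      exact hram ⟨c - a', hbA, hde.2, hde.1⟩
    refine ⟨haA, sameCut_of_key' ?_ (fun c hcA h => hd'A (h ▸ hcA)) ?_⟩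
    · intro c hcA h
      apply hd'A
      have hd'eq : d' = c - a := by rw [← h]; abel
      rw [hd'eq]
      exact A.sub_mem hcA haA
    · intro c hcA
      constructor
      · intro h1
        by_contra h2
        push_neg at h2
        refine habs c hcA ?_
        rw [abs_of_pos (sub_pos.2 h2)]
        have h3 : c - d' ≤ a := by rw [sub_le_iff_le_add, add_comm]; exact h1
        exact h3.trans (le_abs_self a)
      · intro h1
        by_contra h2
        push_neg at h2
        refine habs c hcA ?_
        rw [abs_of_nonpos (sub_nonpos.2 h1)]
        have h5 : a < c - d' := lt_sub_iff_add_lt.2 (by rwa [add_comm] at h2)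
        have h6 := neg_lt_neg h5
        rw [neg_sub] at h6
        exact le_of_lt ((neg_lt_neg h5).trans_le (neg_le_abs a))
  have hεG : ε ∈ Gset A d := hG ▸ hεG'
  have hdA : d ∉ A := by
    intro h
    rw [Gset, if_pos h] at hεG
    exact hεne hεG
  have hεGs : ∀ a ∈ A, a ∉ Stab A d → (-|a| < ε ∧ ε < |a|) := by
    rw [Gset, if_neg hdA] at hεG
    exact hεG
  have hsmall : ∀ a ∈ A, ∀ n : ℕ, ¬ (|d - a| ≤ n • |ε|) :=
    key_small hAdiv hdA hArch hεGs
  have hdεA : d + ε ∉ A := by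
    intro h
    obtain ⟨c, hcA, ⟨n1, h1⟩, ⟨n2, h2⟩⟩ := hArch (d + ε) h
    rw [show d - (d + ε) = -ε from by abel, abs_neg] at h1 h2
    exact hram ⟨c, hcA, ⟨n1, h1⟩, ⟨n2, h2⟩⟩
  have hGeq : Gset A (d + ε) = Gset A d := by
    rw [Gset, Gset, if_neg hdεA, if_neg hdA, stab_add_small_eq hdA hsmall]
  have hArch2 : ¬ Ramified A (d + ε) := by
    rintro ⟨a, haA, hnot⟩
    apply hnot
    obtain ⟨c, hcA, hceq⟩ := hArch a haA
    have h4 : DeltaEq (d - a + ε) (d - a) := deltaEq_add_small (hsmall a haA)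
    rw [show d + ε - a = d - a + ε from by abel]
    exact ⟨c, hcA, deltaLe_trans' h4.1 hceq.1, deltaLe_trans' hceq.2 h4.2⟩
  have hdd' : d + d' = (d + ε) + a' := by rw [hεdef]; abel
  constructor
  · rw [hdd', gset_shift' ha'A, hGeq]
  · rw [hdd']
    exact fun h => hArch2 ((ramified_shift' ha'A).mp h)
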